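/- Let N ≥ 1, n ≥ 0, and let x_0, …, x_{N−1} be nonnegative integers with ∑_k x_k = 2^n. If the probability vector p = (x_0/2^n, …, x_{N−1}/2^n) has exactly m nonzero entries (active states), then p is realizable from the switch set consisting of the single N-state ½-pswitch with at most f(n,m) pswitches. -/

import Mathlib

noncomputable section

/-- Series composition: distribution of `min` of two independent states. -/
def smin {N : ℕ} (p q : Fin N → ℝ) : Fin N → ℝ :=
  fun k => ∑ i, ∑ j, if min i j = k then p i * q j else 0

/-- Parallel composition: distribution of `max` of two independent states. -/
def smax {N : ℕ} (p q : Fin N → ℝ) : Fin N → ℝ :=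
  fun k => ∑ i, ∑ j, if max i j = k then p i * q j else 0

/-- The point mass at state `s`. -/
def delta {N : ℕ} (s : Fin N) : Fin N → ℝ := fun i => if i = s then 1 else 0

/-- `Realizable S p m`: the vector `p` is obtained from point masses (0 pswitches)
and elements of the switch set `S` (1 pswitch each) by series and parallel
compositions, using `m` pswitches in total. -/
inductive Realizable {N : ℕ} (S : Set (Fin N → ℝ)) : (Fin N → ℝ) → ℕ → Prop
  | point (s : Fin N) : Realizable S (delta s) 0
  | single {p : Fin N → ℝ} : p ∈ S → Realizable S p 1
  | series {p q : Fin N → ℝ} {a b : ℕ} :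
      Realizable S p a → Realizable S q b → Realizable S (smin p q) (a + b)
  | parallel {p q : Fin N → ℝ} {a b : ℕ} :
      Realizable S p a → Realizable S q b → Realizable S (smax p q) (a + b)

/-- The `N`-state ½-pswitch: probability ½ on state `0`, ½ on state `N-1`,
and `0` elsewhere. -/
def halfSwitch (N : ℕ) : Fin N → ℝ :=
  fun i => (if (i : ℕ) = 0 then (1 : ℝ) / 2 else 0) + (if (i : ℕ) = N - 1 then (1 : ℝ) / 2 else 0)

/-- The complexity function `f(n,N)`: `2^n - 1` for `n ≤ ⌈log₂ N⌉` and
`(N-1)(n - ⌈log₂ N⌉) + 2^{⌈log₂ N⌉} - 1` for `n ≥ ⌈log₂ N⌉`. -/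
def f (n N : ℕ) : ℕ :=
  if n ≤ Nat.clog 2 N then 2 ^ n - 1
  else (N - 1) * (n - Nat.clog 2 N) + 2 ^ (Nat.clog 2 N) - 1


/-- `g n m = f n m + 1`, a subtraction-free version. -/
def g (n m : ℕ) : ℕ :=
  if n ≤ Nat.clog 2 m then 2 ^ n
  else (m - 1) * (n - Nat.clog 2 m) + 2 ^ (Nat.clog 2 m)

lemma g_pos (n m : ℕ) : 1 ≤ g n m := by
  have h1 : 1 ≤ 2 ^ n := Nat.one_le_two_pow
  have h2 : 1 ≤ 2 ^ (Nat.clog 2 m) := Nat.one_le_two_pow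
  unfold g; split <;> omega

lemma f_add_one (n m : ℕ) : f n m + 1 = g n m := by
  have h1 : 1 ≤ 2 ^ n := Nat.one_le_two_pow
  have h2 : 1 ≤ 2 ^ (Nat.clog 2 m) := Nat.one_le_two_pow
  unfold f g; split <;> omega

lemma g_of_clog_le {n m : ℕ} (h : Nat.clog 2 m ≤ n) :
    g n m = (m - 1) * (n - Nat.clog 2 m) + 2 ^ (Nat.clog 2 m) := by
  unfold g; split
  · have : n = Nat.clog 2 m := le_antisymm ‹_› h
    simp [this]
  · rfl

lemma g_le_two_pow {n m : ℕ} (hm : 1 ≤ m) : g n m ≤ 2 ^ n := by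
  unfold g; split
  · exact le_rfl
  · rename_i h
    push_neg at h
    set c := Nat.clog 2 m with hc
    have hmc : m ≤ 2 ^ c := Nat.le_pow_clog (by norm_num) m
    have h1 : (m - 1) * (n - c) + 2 ^ c ≤ 2 ^ c * (n - c) + 2 ^ c := by
      have : m - 1 ≤ 2 ^ c := by omega
      exact Nat.add_le_add_right (Nat.mul_le_mul_right _ this) _
    have h2 : 2 ^ c * (n - c) + 2 ^ c = 2 ^ c * (n - c + 1) := by ring
    have h3 : n - c + 1 ≤ 2 ^ (n - c) := Nat.lt_two_pow_self
    calc (m - 1) * (n - c) + 2 ^ c ≤ 2 ^ c * (n - c + 1) := by omega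
      _ ≤ 2 ^ c * 2 ^ (n - c) := Nat.mul_le_mul_left _ h3
      _ = 2 ^ n := by rw [← pow_add]; congr 1; omega

/-- The core term bound: for `c' = clog₂ m'` and `c' < c`,
`(m'-1)(c-c'-1) + 2^{c'} ≤ 2^{c-1}`. -/
lemma term_bound {m' c : ℕ} (hm : 1 ≤ m') (hc : Nat.clog 2 m' + 1 ≤ c) :
    (m' - 1) * (c - Nat.clog 2 m' - 1) + 2 ^ (Nat.clog 2 m') ≤ 2 ^ (c - 1) := by
  set c' := Nat.clog 2 m' with hc'
  rcases eq_or_lt_of_le hm with h1 | h2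
  · have hm1 : m' = 1 := h1.symm
    subst hm1
    have hc0 : c' = 0 := by rw [hc']; exact Nat.clog_one_right 2
    rw [hc0]
    have : (1:ℕ) ≤ 2 ^ (c-1) := Nat.one_le_two_pow
    simpa using this
  · -- m' ≥ 2
    have hmc : m' ≤ 2 ^ c' := Nat.le_pow_clog (by norm_num) m'
    set s := c - c' with hs
    have hs1 : 1 ≤ s := by omega
    have e1 : (m' - 1) * (c - c' - 1) + 2 ^ c' ≤ 2 ^ c' * (s - 1) + 2 ^ c' := by
      have : m' - 1 ≤ 2 ^ c' := by omega
      have : (m' - 1) * (c - c' - 1) ≤ 2 ^ c' * (s - 1) := by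
        apply Nat.mul_le_mul this; omega
      omega
    have e2 : 2 ^ c' * (s - 1) + 2 ^ c' = 2 ^ c' * s := by
      have : s - 1 + 1 = s := by omega
      calc 2 ^ c' * (s - 1) + 2 ^ c' = 2 ^ c' * (s - 1 + 1) := by ring
        _ = 2 ^ c' * s := by rw [this]
    have e3 : s ≤ 2 ^ (s - 1) := by
      have := Nat.lt_two_pow_self (n := s - 1)
      omega
    calc (m' - 1) * (c - c' - 1) + 2 ^ c' ≤ 2 ^ c' * s := by omega
      _ ≤ 2 ^ c' * 2 ^ (s - 1) := Nat.mul_le_mul_left _ e3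
      _ = 2 ^ (c - 1) := by rw [← pow_add]; congr 1; omega

lemma two_pow_pred_add {c : ℕ} (hc : 1 ≤ c) : 2 ^ (c-1) + 2 ^ (c-1) = 2 ^ c := by
  rw [← two_mul, ← pow_succ']; congr 1; omega

lemma term_bound' {m' c' c : ℕ} (hm : 1 ≤ m') (hA : m' ≤ 2 ^ c')
    (hm1 : m' = 1 → c' = 0) (hc : c' + 1 ≤ c) :
    (m' - 1) * (c - c' - 1) + 2 ^ c' ≤ 2 ^ (c - 1) := by
  rcases eq_or_lt_of_le hm with h1 | h2
  · have hm11 : m' = 1 := h1.symm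
    have hc0 : c' = 0 := hm1 hm11
    subst hm11; subst hc0
    simpa using Nat.one_le_two_pow (n := c - 1)
  · set s := c - c' with hs
    have hs1 : 1 ≤ s := by omega
    have e1 : (m' - 1) * (c - c' - 1) ≤ 2 ^ c' * (s - 1) :=
      Nat.mul_le_mul (by omega) (by omega)
    have e2 : 2 ^ c' * (s - 1) + 2 ^ c' = 2 ^ c' * s := by
      have h : s - 1 + 1 = s := by omega
      calc 2 ^ c' * (s - 1) + 2 ^ c' = 2 ^ c' * (s - 1 + 1) := by ring
        _ = 2 ^ c' * s := by rw [h]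
    have e3 : s ≤ 2 ^ (s - 1) := by
      have := Nat.lt_two_pow_self (n := s - 1)
      omega
    calc (m' - 1) * (c - c' - 1) + 2 ^ c' ≤ 2 ^ c' * s := by omega
      _ ≤ 2 ^ c' * 2 ^ (s - 1) := Nat.mul_le_mul_left _ e3
      _ = 2 ^ (c - 1) := by rw [← pow_add]; congr 1; omega

lemma key_ineq {n m₁ m₂ c c₁ c₂ : ℕ} (h1 : 1 ≤ m₁) (h2 : 1 ≤ m₂)
    (hA1 : m₁ ≤ 2 ^ c₁) (hA2 : m₂ ≤ 2 ^ c₂)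
    (hB1 : 2 ≤ m₁ → 2 ^ (c₁ - 1) < m₁) (hB2 : 2 ≤ m₂ → 2 ^ (c₂ - 1) < m₂)
    (hm1c : m₁ = 1 → c₁ = 0) (hm2c : m₂ = 1 → c₂ = 0)
    (hc12 : c₁ ≤ c₂) (hc2c : c₂ ≤ c) (hcpos : 1 ≤ c) (hcn : c ≤ n)
    (hm12 : m₁ ≤ m₂) :
    (m₁ - 1) * (n - c₁) + 2 ^ c₁ + ((m₂ - 1) * (n - c₂) + 2 ^ c₂) ≤
      (m₁ - 1) * (n + 1 - c) + (m₂ - 1) * (n + 1 - c) + 2 ^ c := by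
  rcases eq_or_lt_of_le h2 with hm2 | hm2'
  · -- m₂ = 1, hence m₁ = 1
    have hm21 : m₂ = 1 := hm2.symm
    have hm11 : m₁ = 1 := by omega
    have hc20 : c₂ = 0 := hm2c hm21
    have hc10 : c₁ = 0 := hm1c hm11
    have h2c : (2:ℕ) ≤ 2 ^ c := by
      calc (2:ℕ) = 2 ^ 1 := rfl
        _ ≤ 2 ^ c := Nat.pow_le_pow_right (by norm_num) hcpos
    rw [hc10, hc20, hm11, hm21]
    simp
    omega
  · have hm2b : 2 ≤ m₂ := hm2'
    by_cases hcc2 : c₂ + 1 ≤ c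
    · -- c₂ < c, hence c₁ < c
      have tb1 := term_bound' (c := c) h1 hA1 hm1c (by omega)
      have tb2 := term_bound' h2 hA2 hm2c hcc2
      have e1 : (m₁ - 1) * (n - c₁) = (m₁ - 1) * (n + 1 - c) + (m₁ - 1) * (c - c₁ - 1) := by
        rw [← Nat.mul_add]; congr 1; omega
      have e2 : (m₂ - 1) * (n - c₂) = (m₂ - 1) * (n + 1 - c) + (m₂ - 1) * (c - c₂ - 1) := by
        rw [← Nat.mul_add]; congr 1; omega
      have e3 := two_pow_pred_add hcpos
      linarith
    · -- c₂ = c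
      have hc2eq : c₂ = c := by omega
      have hb2 : 2 ^ (c - 1) ≤ m₂ - 1 := by
        have := hB2 hm2b
        rw [hc2eq] at this
        omega
      by_cases hcc1 : c₁ + 1 ≤ c
      · have tb1 := term_bound' (c := c) h1 hA1 hm1c hcc1
        have e1 : (m₁ - 1) * (n - c₁) = (m₁ - 1) * (n + 1 - c) + (m₁ - 1) * (c - c₁ - 1) := by
          rw [← Nat.mul_add]; congr 1; omega
        have e2 : (m₂ - 1) * (n + 1 - c) = (m₂ - 1) * (n - c₂) + (m₂ - 1) := by
          rw [hc2eq, ← Nat.mul_succ]; congr 1; omega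
        have e4 : (2:ℕ) ^ c₂ = 2 ^ c := by rw [hc2eq]
        linarith
      · -- c₁ = c as well; then m₁ ≥ 2
        have hc1eq : c₁ = c := by omega
        have hm1b : 2 ≤ m₁ := by
          by_contra hcon
          have hm11 : m₁ = 1 := by omega
          have := hm1c hm11
          omega
        have hb1 : 2 ^ (c - 1) ≤ m₁ - 1 := by
          have := hB1 hm1b
          rw [hc1eq] at this
          omega
        have e1 : (m₁ - 1) * (n + 1 - c) = (m₁ - 1) * (n - c₁) + (m₁ - 1) := by
          rw [hc1eq, ← Nat.mul_succ]; congr 1; omega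
        have e2 : (m₂ - 1) * (n + 1 - c) = (m₂ - 1) * (n - c₂) + (m₂ - 1) := by
          rw [hc2eq, ← Nat.mul_succ]; congr 1; omega
        have e3 := two_pow_pred_add hcpos
        have e4 : (2:ℕ) ^ c₂ = 2 ^ c := by rw [hc2eq]
        have e5 : (2:ℕ) ^ c₁ = 2 ^ c := by rw [hc1eq]
        linarith

lemma g_split_aux {n m m₁ m₂ : ℕ} (h1 : 1 ≤ m₁) (h2 : 1 ≤ m₂) (h12 : m₁ ≤ m₂)
    (hm : 2 ≤ m) (hs : m₁ + m₂ ≤ m + 1) : g n m₁ + g n m₂ ≤ g (n + 1) m := by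
  have hc_pos : 1 ≤ Nat.clog 2 m := Nat.clog_pos (by norm_num) hm
  have hm2le : m₂ ≤ m := by omega
  have hc2c : Nat.clog 2 m₂ ≤ Nat.clog 2 m := Nat.clog_mono_right 2 hm2le
  have hc12 : Nat.clog 2 m₁ ≤ Nat.clog 2 m₂ := Nat.clog_mono_right 2 h12
  by_cases hcn : Nat.clog 2 m ≤ n
  · -- linear regime
    rw [g_of_clog_le (show Nat.clog 2 m₁ ≤ n by omega),
      g_of_clog_le (show Nat.clog 2 m₂ ≤ n by omega),
      g_of_clog_le (show Nat.clog 2 m ≤ n + 1 by omega)]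
    have hmm : (m₁ - 1) * (n + 1 - Nat.clog 2 m) + (m₂ - 1) * (n + 1 - Nat.clog 2 m) ≤
        (m - 1) * (n + 1 - Nat.clog 2 m) := by
      rw [← Nat.add_mul]
      exact Nat.mul_le_mul_right _ (by omega)
    have key := key_ineq (n := n) (c := Nat.clog 2 m) h1 h2
      (Nat.le_pow_clog (by norm_num) m₁) (Nat.le_pow_clog (by norm_num) m₂)
      (fun hb => by
        simpa [Nat.pred_eq_sub_one] using
          Nat.pow_pred_clog_lt_self (b := 2) (by norm_num) (show 1 < m₁ by omega))
      (fun hb => by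
        simpa [Nat.pred_eq_sub_one] using
          Nat.pow_pred_clog_lt_self (b := 2) (by norm_num) (show 1 < m₂ by omega))
      (fun hb => by rw [hb, Nat.clog_one_right])
      (fun hb => by rw [hb, Nat.clog_one_right])
      hc12 hc2c hc_pos hcn h12
    omega
  · -- 2^(n+1) regime
    have hg : g (n + 1) m = 2 ^ (n + 1) := by
      rw [g, if_pos (by omega)]
    have e : 2 ^ (n + 1) = 2 ^ n + 2 ^ n := by rw [pow_succ]; ring
    have b1 := g_le_two_pow (n := n) h1
    have b2 := g_le_two_pow (n := n) h2
    omega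

lemma g_split {n m m₁ m₂ : ℕ} (h1 : 1 ≤ m₁) (h2 : 1 ≤ m₂)
    (hm : 2 ≤ m) (hs : m₁ + m₂ ≤ m + 1) : g n m₁ + g n m₂ ≤ g (n + 1) m := by
  rcases le_total m₁ m₂ with h | h
  · exact g_split_aux h1 h2 h hm hs
  · rw [add_comm]
    exact g_split_aux h2 h1 h hm (by omega)

section Analytic

open Finset

lemma smin_half_eq {N : ℕ} (hN : 2 ≤ N) (r : Fin N → ℝ) (hr : ∑ j, r j = 1) :
    smin (halfSwitch N) r =
      fun k => (if k = (⟨0, by omega⟩ : Fin N) then (1:ℝ)/2 else 0) + r k / 2 := by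
  set i0 : Fin N := ⟨0, by omega⟩ with hi0
  set i1 : Fin N := ⟨N - 1, by omega⟩ with hi1
  funext k
  show (∑ i, ∑ j, if min i j = k then halfSwitch N i * r j else 0) = _
  have expand : ∀ i j : Fin N,
      (if min i j = k then halfSwitch N i * r j else 0) =
        (if min i j = k then (if i = i0 then (1:ℝ)/2 else 0) * r j else 0) +
        (if min i j = k then (if i = i1 then (1:ℝ)/2 else 0) * r j else 0) := by
    intro i j
    have h1 : ((i:ℕ) = 0) ↔ (i = i0) := by
      simp [hi0, Fin.ext_iff]
    have h2 : ((i:ℕ) = N - 1) ↔ (i = i1) := by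
      simp [hi1, Fin.ext_iff]
    rw [halfSwitch]
    simp only [h1, h2]
    by_cases hc : min i j = k
    · simp [hc, add_mul]
    · simp [hc]
  simp_rw [expand, Finset.sum_add_distrib]
  have hmin0 : ∀ j : Fin N, min i0 j = i0 := fun j => min_eq_left (by
    simp [hi0, Fin.le_def])
  have hmin1 : ∀ j : Fin N, min i1 j = j := fun j => min_eq_right (by
    have := j.isLt
    simp [hi1, Fin.le_def]
    omega)
  have sum1 : (∑ i, ∑ j, if min i j = k then (if i = i0 then (1:ℝ)/2 else 0) * r j else 0) =
      (if k = i0 then (1:ℝ)/2 else 0) := by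
    rw [Finset.sum_eq_single i0 (fun i _ hi => by simp [hi]) (fun h => absurd (Finset.mem_univ i0) h)]
    have step : ∀ j : Fin N,
        (if min i0 j = k then (if i0 = i0 then (1:ℝ)/2 else 0) * r j else 0) =
        (if k = i0 then (1:ℝ)/2 * r j else 0) := by
      intro j
      rw [hmin0 j, if_pos rfl]
      by_cases hk : i0 = k
      · rw [if_pos hk, if_pos hk.symm]
      · rw [if_neg hk, if_neg (fun h => hk h.symm)]
    rw [Finset.sum_congr rfl (fun j _ => step j)]
    by_cases hk : k = i0
    · rw [if_pos hk]
      simp_rw [if_pos hk]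
      rw [← Finset.mul_sum, hr, mul_one]
    · simp [hk]
  have sum2 : (∑ i, ∑ j, if min i j = k then (if i = i1 then (1:ℝ)/2 else 0) * r j else 0) =
      r k / 2 := by
    rw [Finset.sum_eq_single i1 (fun i _ hi => by simp [hi]) (fun h => absurd (Finset.mem_univ i1) h)]
    have step : ∀ j : Fin N,
        (if min i1 j = k then (if i1 = i1 then (1:ℝ)/2 else 0) * r j else 0) =
        (if j = k then (1:ℝ)/2 * r j else 0) := by
      intro j
      rw [hmin1 j, if_pos rfl]
    rw [Finset.sum_congr rfl (fun j _ => step j)]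
    rw [Finset.sum_ite_eq' Finset.univ k (fun j => (1:ℝ)/2 * r j)]
    simp
    ring
  rw [sum1, sum2]

lemma combine {N : ℕ} (hN : 2 ≤ N) (q r : Fin N → ℝ) (hq : ∑ i, q i = 1)
    (hr : ∑ j, r j = 1) (hord : ∀ i j, q i ≠ 0 → r j ≠ 0 → i ≤ j) :
    smax q (smin (halfSwitch N) r) = fun k => (q k + r k) / 2 := by
  rw [smin_half_eq hN r hr]
  set i0 : Fin N := ⟨0, by omega⟩ with hi0
  funext k
  show (∑ i, ∑ j, if max i j = k then
      q i * ((if j = i0 then (1:ℝ)/2 else 0) + r j / 2) else 0) = _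
  have expand : ∀ i j : Fin N,
      (if max i j = k then q i * ((if j = i0 then (1:ℝ)/2 else 0) + r j / 2) else 0) =
        (if max i j = k then q i * (if j = i0 then (1:ℝ)/2 else 0) else 0) +
        (if max i j = k then q i * (r j / 2) else 0) := by
    intro i j
    by_cases hc : max i j = k
    · simp [hc, mul_add]
    · simp [hc]
  simp_rw [expand, Finset.sum_add_distrib]
  have hmax0 : ∀ i : Fin N, max i i0 = i := fun i => max_eq_left (by
    simp [hi0, Fin.le_def])
  have sumA : (∑ i, ∑ j, if max i j = k then q i * (if j = i0 then (1:ℝ)/2 else 0) else 0) =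
      q k / 2 := by
    have inner : ∀ i : Fin N,
        (∑ j, if max i j = k then q i * (if j = i0 then (1:ℝ)/2 else 0) else 0) =
        (if i = k then q i * ((1:ℝ)/2) else 0) := by
      intro i
      rw [Finset.sum_eq_single i0 (fun j _ hj => by simp [hj]) (fun h => absurd (Finset.mem_univ i0) h)]
      rw [hmax0 i, if_pos rfl]
    rw [Finset.sum_congr rfl (fun i _ => inner i)]
    rw [Finset.sum_ite_eq' Finset.univ k (fun i => q i * ((1:ℝ)/2))]
    simp
    ring
  have sumB : (∑ i, ∑ j, if max i j = k then q i * (r j / 2) else 0) = r k / 2 := by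
    have term : ∀ i j : Fin N,
        (if max i j = k then q i * (r j / 2) else 0) =
        (if j = k then q i * (r j / 2) else 0) := by
      intro i j
      by_cases hqi : q i = 0
      · simp [hqi]
      · by_cases hrj : r j = 0
        · simp [hrj]
        · have hij : i ≤ j := hord i j hqi hrj
          rw [max_eq_right hij]
    simp_rw [term]
    have inner : ∀ i : Fin N,
        (∑ j, if j = k then q i * (r j / 2) else 0) = q i * (r k / 2) := by
      intro i
      rw [Finset.sum_ite_eq' Finset.univ k (fun j => q i * (r j / 2))]
      simp
    rw [Finset.sum_congr rfl (fun i _ => inner i)]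
    rw [← Finset.sum_mul, hq, one_mul]
  rw [sumA, sumB]
  ring

end Analytic

section Main

open Finset

lemma eq_delta {N n : ℕ} (x : Fin N → ℕ) (hx : ∑ k, x k = 2 ^ n) (k0 : Fin N)
    (h0 : ∀ j, j ≠ k0 → x j = 0) :
    (fun k => (x k : ℝ) / 2 ^ n) = delta k0 := by
  have hk0 : x k0 = 2 ^ n := by
    have herase : ∑ k ∈ Finset.univ.erase k0, x k + x k0 = ∑ k, x k :=
      Finset.sum_erase_add _ _ (Finset.mem_univ k0)
    have hz : ∑ k ∈ Finset.univ.erase k0, x k = 0 :=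
      Finset.sum_eq_zero fun j hj => h0 j (Finset.ne_of_mem_erase hj)
    omega
  funext k
  by_cases hk : k = k0
  · subst hk
    rw [hk0, delta, if_pos rfl]
    push_cast
    rw [div_self]
    positivity
  · rw [h0 k hk, delta, if_neg hk]
    simp

lemma main_aux {N : ℕ} (n : ℕ) (x : Fin N → ℕ) (hx : ∑ k, x k = 2 ^ n) :
    ∃ a, a + 1 ≤ g n ((Finset.univ.filter fun k => x k ≠ 0).card) ∧
      Realizable {halfSwitch N} (fun k => (x k : ℝ) / 2 ^ n) a := by
  induction n generalizing x with
  | zero =>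
    obtain ⟨k0, _, hk0⟩ := Finset.exists_ne_zero_of_sum_ne_zero
      (show ∑ k, x k ≠ 0 by rw [hx]; positivity)
    have h0 : ∀ j, j ≠ k0 → x j = 0 := by
      intro j hj
      have hsingle : x k0 ≤ ∑ k, x k :=
        Finset.single_le_sum (fun i _ => Nat.zero_le (x i)) (Finset.mem_univ k0)
      have herase : ∑ k ∈ Finset.univ.erase k0, x k + x k0 = ∑ k, x k :=
        Finset.sum_erase_add _ _ (Finset.mem_univ k0)
      have hz : ∑ k ∈ Finset.univ.erase k0, x k = 0 := by
        rw [hx] at herase hsingle; omega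
      exact (Finset.sum_eq_zero_iff.mp hz) j (Finset.mem_erase.mpr ⟨hj, Finset.mem_univ j⟩)
    refine ⟨0, by have := g_pos 0 ((Finset.univ.filter fun k => x k ≠ 0).card); omega, ?_⟩
    rw [eq_delta x hx k0 h0]
    exact Realizable.point k0
  | succ n ih =>
    by_cases hsing : ∃ k0, ∀ j, j ≠ k0 → x j = 0
    · obtain ⟨k0, h0⟩ := hsing
      refine ⟨0, by have := g_pos (n+1) ((Finset.univ.filter fun k => x k ≠ 0).card); omega, ?_⟩
      rw [eq_delta x hx k0 h0]
      exact Realizable.point k0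
    · push_neg at hsing
      -- at least two active states
      obtain ⟨k0, _, hk0⟩ := Finset.exists_ne_zero_of_sum_ne_zero
        (show ∑ k, x k ≠ 0 by rw [hx]; positivity)
      obtain ⟨j0, hj0ne, hj0⟩ := hsing k0
      have hm2 : 2 ≤ (Finset.univ.filter fun k => x k ≠ 0).card := by
        rw [Nat.succ_le_iff]
        exact Finset.one_lt_card.mpr
          ⟨j0, Finset.mem_filter.mpr ⟨Finset.mem_univ _, hj0⟩,
           k0, Finset.mem_filter.mpr ⟨Finset.mem_univ _, hk0⟩, hj0ne⟩
      have hN2 : 2 ≤ N := by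
        have h1 := j0.isLt
        have h2 := k0.isLt
        have h3 : (j0 : ℕ) ≠ (k0 : ℕ) := fun h => hj0ne (Fin.ext h)
        omega
      -- the cut point
      set X : ℕ → ℕ := fun t => if h : t < N then x ⟨t, h⟩ else 0 with hX
      have hXval : ∀ i : Fin N, X (i : ℕ) = x i := by
        intro i
        simp only [hX, i.isLt, dif_pos, Fin.eta]
      have hXsum : ∑ t ∈ Finset.range N, X t = 2 ^ (n + 1) := by
        rw [← Fin.sum_univ_eq_sum_range (fun t => X t) N, ← hx]
        exact Finset.sum_congr rfl fun i _ => hXval i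
      have hPex : ∃ s, 2 ^ n ≤ ∑ t ∈ Finset.range (s + 1), X t := by
        refine ⟨N - 1, ?_⟩
        rw [show N - 1 + 1 = N by omega, hXsum]
        exact Nat.pow_le_pow_right (by norm_num) (by omega)
      set s := Nat.find hPex with hsdef
      have hsP : 2 ^ n ≤ ∑ t ∈ Finset.range (s + 1), X t := Nat.find_spec hPex
      have hAs : ∑ t ∈ Finset.range s, X t < 2 ^ n := by
        rcases Nat.eq_zero_or_pos s with h | h
        · rw [h]
          simp
        · have hmin := Nat.find_min hPex (show s - 1 < s by omega)
          rw [show s - 1 + 1 = s by omega] at hmin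
          omega
      have hsN : s < N := by
        have : s ≤ N - 1 := Nat.find_min' hPex (by
          rw [show N - 1 + 1 = N by omega, hXsum]
          exact Nat.pow_le_pow_right (by norm_num) (by omega))
        omega
      have hXs : X s = x ⟨s, hsN⟩ := by simp only [hX, hsN, dif_pos]
      have hsumsucc : ∑ t ∈ Finset.range (s + 1), X t
          = ∑ t ∈ Finset.range s, X t + X s := Finset.sum_range_succ X s
      -- the two halves
      set y : Fin N → ℕ := fun k =>
        if (k : ℕ) < s then x k
        else if (k : ℕ) = s then 2 ^ n - ∑ t ∈ Finset.range s, X t else 0 with hy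
      set z : Fin N → ℕ := fun k => x k - y k with hz
      have hyle : ∀ k, y k ≤ x k := by
        intro k
        rw [hy]
        dsimp only
        split
        · exact le_rfl
        · split
          · rename_i h1 h2
            have hk : k = ⟨s, hsN⟩ := Fin.ext h2
            rw [hk, ← hXs]
            omega
          · exact Nat.zero_le _
      have hyz : ∀ k, y k + z k = x k := by
        intro k
        have := hyle k
        rw [hz]
        dsimp only
        omega
      -- sum of y
      have hYval : ∀ t (h1 : t < N), t < s → X t = y ⟨t, h1⟩ := by
        intro t h1 h2
        rw [hy]
        dsimp only
        rw [if_pos h2, hX]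
        dsimp only
        rw [dif_pos h1]
      have hysum : ∑ k, y k = 2 ^ n := by
        set Y : ℕ → ℕ := fun t => if h : t < N then y ⟨t, h⟩ else 0 with hYdef
        have hYv : ∀ i : Fin N, Y (i : ℕ) = y i := by
          intro i
          simp only [hYdef, i.isLt, dif_pos, Fin.eta]
        have h1 : ∑ k, y k = ∑ t ∈ Finset.range N, Y t := by
          rw [← Fin.sum_univ_eq_sum_range (fun t => Y t) N]
          exact (Finset.sum_congr rfl fun i _ => (hYv i)).symm
        have h2 : ∑ t ∈ Finset.range N, Y t = ∑ t ∈ Finset.range (s + 1), Y t := by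
          refine (Finset.sum_subset (Finset.range_subset_range.mpr (by omega)) ?_).symm
          intro t _ ht2
          have hts : s < t := by
            rw [Finset.mem_range] at ht2
            omega
          rw [hYdef]
          dsimp only
          split
          · rw [hy]
            dsimp only
            rw [if_neg (by omega), if_neg (by omega)]
          · rfl
        have h3 : ∑ t ∈ Finset.range s, Y t = ∑ t ∈ Finset.range s, X t := by
          refine Finset.sum_congr rfl fun t ht => ?_
          rw [Finset.mem_range] at ht
          rw [hYdef]
          dsimp only
          rw [dif_pos (by omega : t < N)]
          exact (hYval t (by omega) ht).symm
        have h4 : Y s = 2 ^ n - ∑ t ∈ Finset.range s, X t := by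
          rw [hYdef]
          dsimp only
          rw [dif_pos hsN, hy]
          dsimp only
          rw [if_neg (by omega), if_pos rfl]
        rw [h1, h2, Finset.sum_range_succ, h3, h4]
        omega
      have hzsum : ∑ k, z k = 2 ^ n := by
        have hadd : ∑ k, y k + ∑ k, z k = ∑ k, x k := by
          rw [← Finset.sum_add_distrib]
          exact Finset.sum_congr rfl fun k _ => hyz k
        rw [hx, hysum] at hadd
        have : (2:ℕ) ^ (n + 1) = 2 ^ n + 2 ^ n := by rw [pow_succ]; ring
        omega
      -- supports
      have hys : ∀ k, y k ≠ 0 → (k : ℕ) ≤ s := by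
        intro k hk
        rw [hy] at hk
        dsimp only at hk
        by_contra hc
        rw [if_neg (by omega), if_neg (by omega)] at hk
        exact hk rfl
      have hzs : ∀ k, z k ≠ 0 → s ≤ (k : ℕ) := by
        intro k hk
        by_contra hc
        push_neg at hc
        apply hk
        rw [hz]
        dsimp only
        rw [hy]
        dsimp only
        rw [if_pos hc]
        omega
      -- support cardinalities
      set m₁ := (Finset.univ.filter fun k => y k ≠ 0).card with hm₁
      set m₂ := (Finset.univ.filter fun k => z k ≠ 0).card with hm₂
      have hm₁pos : 1 ≤ m₁ := by
        obtain ⟨k, _, hk⟩ := Finset.exists_ne_zero_of_sum_ne_zero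
          (show ∑ k, y k ≠ 0 by rw [hysum]; positivity)
        exact Finset.card_pos.mpr ⟨k, Finset.mem_filter.mpr ⟨Finset.mem_univ _, hk⟩⟩
      have hm₂pos : 1 ≤ m₂ := by
        obtain ⟨k, _, hk⟩ := Finset.exists_ne_zero_of_sum_ne_zero
          (show ∑ k, z k ≠ 0 by rw [hzsum]; positivity)
        exact Finset.card_pos.mpr ⟨k, Finset.mem_filter.mpr ⟨Finset.mem_univ _, hk⟩⟩
      have hsplit : m₁ + m₂ ≤ (Finset.univ.filter fun k => x k ≠ 0).card + 1 := by
        have hun : (Finset.univ.filter fun k => y k ≠ 0) ∪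
            (Finset.univ.filter fun k => z k ≠ 0) ⊆
            (Finset.univ.filter fun k => x k ≠ 0) := by
          intro k hk
          rw [Finset.mem_union, Finset.mem_filter, Finset.mem_filter] at hk
          rw [Finset.mem_filter]
          refine ⟨Finset.mem_univ _, ?_⟩
          have := hyle k
          have := hyz k
          rcases hk with ⟨_, h⟩ | ⟨_, h⟩ <;> omega
        have hin : (Finset.univ.filter fun k => y k ≠ 0) ∩
            (Finset.univ.filter fun k => z k ≠ 0) ⊆ {(⟨s, hsN⟩ : Fin N)} := by
          intro k hk
          rw [Finset.mem_inter, Finset.mem_filter, Finset.mem_filter] at hk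
          have h1 := hys k hk.1.2
          have h2 := hzs k hk.2.2
          rw [Finset.mem_singleton]
          exact Fin.ext (show (k:ℕ) = s by omega)
        have := Finset.card_union_add_card_inter
          (Finset.univ.filter fun k => y k ≠ 0) (Finset.univ.filter fun k => z k ≠ 0)
        have hc1 := Finset.card_le_card hun
        have hc2 := Finset.card_le_card hin
        rw [Finset.card_singleton] at hc2
        omega
      -- induction hypotheses
      obtain ⟨a₁, ha₁g, ha₁R⟩ := ih y hysum
      obtain ⟨a₂, ha₂g, ha₂R⟩ := ih z hzsum
      -- assemble
      have hqsum : ∑ i, ((y i : ℝ) / 2 ^ n) = 1 := by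
        rw [← Finset.sum_div]
        rw [show ∑ i, ((y i : ℝ)) = ((∑ i, y i : ℕ) : ℝ) by push_cast; ring, hysum]
        push_cast
        rw [div_self]
        positivity
      have hrsum : ∑ i, ((z i : ℝ) / 2 ^ n) = 1 := by
        rw [← Finset.sum_div]
        rw [show ∑ i, ((z i : ℝ)) = ((∑ i, z i : ℕ) : ℝ) by push_cast; ring, hzsum]
        push_cast
        rw [div_self]
        positivity
      have hord : ∀ i j : Fin N, ((y i : ℝ) / 2 ^ n) ≠ 0 → ((z j : ℝ) / 2 ^ n) ≠ 0 → i ≤ j := by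
        intro i j hi hj
        have h1 : y i ≠ 0 := by
          intro h
          apply hi
          rw [h]
          simp
        have h2 : z j ≠ 0 := by
          intro h
          apply hj
          rw [h]
          simp
        rw [Fin.le_def]
        have := hys i h1
        have := hzs j h2
        omega
      have hcomb := combine hN2 (fun i => (y i : ℝ) / 2 ^ n) (fun j => (z j : ℝ) / 2 ^ n)
        hqsum hrsum hord
      have hfun : (fun k => ((x k : ℝ)) / 2 ^ (n + 1)) =
          fun k => ((y k : ℝ) / 2 ^ n + (z k : ℝ) / 2 ^ n) / 2 := by
        funext k
        rw [← hyz k]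
        push_cast
        ring
      have hreal : Realizable {halfSwitch N} (fun k => (x k : ℝ) / 2 ^ (n + 1))
          (a₁ + (1 + a₂)) := by
        rw [hfun, ← hcomb]
        exact Realizable.parallel ha₁R (Realizable.series (Realizable.single rfl) ha₂R)
      refine ⟨a₁ + (1 + a₂), ?_, hreal⟩
      rw [← hm₁] at ha₁g
      rw [← hm₂] at ha₂g
      have := g_split (n := n) hm₁pos hm₂pos hm2 hsplit
      omega

end Main

/-- Active-state lemma: if `(x₀/2^n, …, x_{N-1}/2^n)` has exactly `m` nonzero
entries (active states), then it is realizable from the single `N`-state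
½-pswitch using at most `f(n,m)` pswitches. -/
theorem active_states (N : ℕ) (hN : 1 ≤ N) (n : ℕ) (x : Fin N → ℕ)
    (hx : ∑ k, x k = 2 ^ n) (m : ℕ)
    (hm : m = (Finset.univ.filter fun k => x k ≠ 0).card) :
    ∃ a ≤ f n m, Realizable {halfSwitch N} (fun k => (x k : ℝ) / 2 ^ n) a := by
  obtain ⟨a, hag, haR⟩ := main_aux n x hx
  refine ⟨a, ?_, haR⟩
  have := f_add_one n m
  rw [hm] at this ⊢
  omega
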